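/- Let s ≥ 2 and let R ⊆ ℤ² be a finite nonempty region, with Ω its set of (1,s)-tilings (Ω is nonempty since the all-unit-tiles tiling {(q,1) : q ∈ R} belongs to Ω). Define the matrix P on Ω by P(T,T') = 1/(2|R|) whenever T ≠ T' differ by a central flip, P(T,T') = 0 for all other T' ≠ T, and P(T,T) = 1 − Σ_{T'≠T} P(T,T'). Then P is a symmetric row-stochastic matrix, the resulting Markov chain is irreducible and aperiodic, and its unique stationary distribution is the uniform distribution on Ω. -/
import Mathlib


open Finset

/-- The k×k square of cells with lower-left corner `p`. -/
def sqCells (p : ℤ × ℤ) (k : ℕ) : Finset (ℤ × ℤ) :=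
  (Finset.range k ×ˢ Finset.range k).image fun ij => (p.1 + ij.1, p.2 + ij.2)

/-- `T` is an (m,s)-tiling of the finite region `R`. -/
def IsTiling (m s : ℕ) (R : Finset (ℤ × ℤ)) (T : Finset ((ℤ × ℤ) × ℕ)) : Prop :=
  (∀ t ∈ T, t.2 = m ∨ t.2 = s) ∧
  (∀ t ∈ T, ∀ t' ∈ T, t ≠ t' → Disjoint (sqCells t.1 t.2) (sqCells t'.1 t'.2)) ∧
  T.biUnion (fun t => sqCells t.1 t.2) = R

/-- `T'` is obtained from `T` by replacing one s×s tile by s² unit tiles. -/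
def centralFlipTo (s : ℕ) (T T' : Finset ((ℤ × ℤ) × ℕ)) : Prop :=
  ∃ p : ℤ × ℤ, (p, s) ∈ T ∧
    T' = (T.erase (p, s)) ∪ (sqCells p s).image (fun q => (q, 1))

/-- `T` and `T'` differ by a central flip. -/
def CentralFlip (s : ℕ) (T T' : Finset ((ℤ × ℤ) × ℕ)) : Prop :=
  centralFlipTo s T T' ∨ centralFlipTo s T' T

lemma mem_sqCells {p q : ℤ × ℤ} {k : ℕ} :
    q ∈ sqCells p k ↔ ∃ i < k, ∃ j < k, q = (p.1 + i, p.2 + j) := by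
  simp only [sqCells, mem_image, mem_product, mem_range, Prod.exists]
  constructor
  · rintro ⟨i, j, ⟨hi, hj⟩, rfl⟩; exact ⟨i, hi, j, hj, rfl⟩
  · rintro ⟨i, hi, j, hj, rfl⟩; exact ⟨i, j, ⟨hi, hj⟩, rfl⟩

lemma sqCells_one (p : ℤ × ℤ) : sqCells p 1 = {p} := by
  ext q
  simp only [mem_sqCells, mem_singleton]
  constructor
  · rintro ⟨i, hi, j, hj, rfl⟩
    interval_cases i <;> interval_cases j <;> simp
  · rintro rfl; exact ⟨0, one_pos, 0, one_pos, by simp⟩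

lemma mem_self_sqCells (p : ℤ × ℤ) {k : ℕ} (hk : 0 < k) : p ∈ sqCells p k :=
  mem_sqCells.mpr ⟨0, hk, 0, hk, by simp⟩

lemma card_sqCells (p : ℤ × ℤ) (k : ℕ) : (sqCells p k).card = k * k := by
  rw [sqCells, Finset.card_image_of_injOn, Finset.card_product, Finset.card_range]
  rintro ⟨i, j⟩ hij ⟨i', j'⟩ hij' h
  simp only [Prod.mk.injEq, add_right_inj] at h
  exact Prod.ext (by exact_mod_cast h.1) (by exact_mod_cast h.2)
open Finset

lemma biUnion_union' {α β : Type*} [DecidableEq α] [DecidableEq β]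
    (s t : Finset α) (f : α → Finset β) :
    (s ∪ t).biUnion f = s.biUnion f ∪ t.biUnion f := by
  ext b
  simp only [mem_biUnion, mem_union, or_and_right, exists_or]

lemma unit_tiling (s : ℕ) (R : Finset (ℤ × ℤ)) :
    IsTiling 1 s R (R.image fun q => (q, 1)) := by
  refine ⟨?_, ?_, ?_⟩
  · intro t ht
    simp only [mem_image] at ht
    obtain ⟨q, _, rfl⟩ := ht
    exact Or.inl rfl
  · intro t ht t' ht' hne
    simp only [mem_image] at ht ht'
    obtain ⟨q, _, rfl⟩ := ht
    obtain ⟨q', _, rfl⟩ := ht'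
    have : q ≠ q' := fun h => hne (by rw [h])
    simp [sqCells_one, this, this.symm]
  · ext q
    simp only [mem_biUnion, mem_image]
    constructor
    · rintro ⟨t, ⟨q', hq', rfl⟩, hq⟩
      rw [sqCells_one] at hq
      simp only [mem_singleton] at hq
      exact hq ▸ hq'
    · intro hq
      exact ⟨(q, 1), ⟨q, hq, rfl⟩, by rw [sqCells_one]; exact mem_singleton_self q⟩

lemma tile_subset {s : ℕ} {R : Finset (ℤ × ℤ)} {T : Finset ((ℤ × ℤ) × ℕ)}
    (hT : IsTiling 1 s R T) {t : (ℤ × ℤ) × ℕ} (ht : t ∈ T) :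
    sqCells t.1 t.2 ⊆ R := by
  rw [← hT.2.2]
  exact Finset.subset_biUnion_of_mem (fun t : (ℤ × ℤ) × ℕ => sqCells t.1 t.2) ht

lemma no_s_tiles {s : ℕ} (hs : 2 ≤ s) {R : Finset (ℤ × ℤ)} {T : Finset ((ℤ × ℤ) × ℕ)}
    (hT : IsTiling 1 s R T) (h : ∀ t ∈ T, t.2 ≠ s) :
    T = R.image fun q => (q, 1) := by
  have hone : ∀ t ∈ T, t.2 = 1 := fun t ht => (hT.1 t ht).resolve_right (h t ht)
  ext t
  simp only [mem_image]
  constructor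
  · intro ht
    have h1 := hone t ht
    refine ⟨t.1, ?_, by rw [← h1]⟩
    have := tile_subset hT ht
    rw [h1, sqCells_one] at this
    exact this (mem_singleton_self _)
  · rintro ⟨q, hq, rfl⟩
    rw [← hT.2.2] at hq
    simp only [mem_biUnion] at hq
    obtain ⟨t, ht, hqt⟩ := hq
    have h1 := hone t ht
    rw [h1, sqCells_one, mem_singleton] at hqt
    have : t = (q, 1) := Prod.ext hqt.symm h1
    exact this ▸ ht

/-- Flipping an s-tile down to unit tiles stays a tiling. -/
lemma flipdown_tiling {s : ℕ} (hs : 2 ≤ s) {R : Finset (ℤ × ℤ)} {T : Finset ((ℤ × ℤ) × ℕ)}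
    (hT : IsTiling 1 s R T) {p : ℤ × ℤ} (hp : (p, s) ∈ T) :
    IsTiling 1 s R ((T.erase (p, s)) ∪ (sqCells p s).image (fun q => (q, 1))) := by
  obtain ⟨hsz, hdisj, hun⟩ := hT
  have hmem : ∀ t, t ∈ (T.erase (p, s)) ∪ (sqCells p s).image (fun q => (q, 1)) →
      (t ∈ T ∧ t ≠ (p, s)) ∨ (∃ q ∈ sqCells p s, t = (q, 1)) := by
    intro t ht
    rcases Finset.mem_union.mp ht with h | h
    · exact Or.inl ⟨Finset.mem_of_mem_erase h, Finset.ne_of_mem_erase h⟩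
    · simp only [mem_image] at h
      obtain ⟨q, hq, rfl⟩ := h
      exact Or.inr ⟨q, hq, rfl⟩
  refine ⟨?_, ?_, ?_⟩
  · intro t ht
    rcases hmem t ht with ⟨h, _⟩ | ⟨q, _, rfl⟩
    · exact hsz t h
    · exact Or.inl rfl
  · intro t ht t' ht' hne
    rcases hmem t ht with ⟨h, hne1⟩ | ⟨q, hq, rfl⟩ <;>
      rcases hmem t' ht' with ⟨h', hne1'⟩ | ⟨q', hq', rfl⟩
    · exact hdisj t h t' h' hne
    · have := hdisj t h (p, s) hp hne1
      simp only [sqCells_one]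
      exact this.mono_right (Finset.singleton_subset_iff.mpr hq')
    · have := hdisj (p, s) hp t' h' (Ne.symm hne1')
      simp only [sqCells_one]
      exact this.mono_left (Finset.singleton_subset_iff.mpr hq)
    · have : q ≠ q' := fun hqq => hne (by rw [hqq])
      simp only [sqCells_one, Finset.disjoint_singleton]
      first
        | exact this
        | exact fun h => this h.symm
  · have hTsplit : T = insert (p, s) (T.erase (p, s)) := (Finset.insert_erase hp).symm
    have himg : ((sqCells p s).image (fun q => (q, 1))).biUnion
        (fun t : (ℤ × ℤ) × ℕ => sqCells t.1 t.2) = sqCells p s := by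
      ext q
      simp only [mem_biUnion, mem_image]
      constructor
      · rintro ⟨t, ⟨q', hq', rfl⟩, hqt⟩
        rw [sqCells_one, mem_singleton] at hqt
        exact hqt ▸ hq'
      · intro hq
        exact ⟨(q, 1), ⟨q, hq, rfl⟩, by rw [sqCells_one]; exact mem_singleton_self q⟩
    rw [biUnion_union', himg, ← hun]
    conv_rhs => rw [hTsplit, Finset.biUnion_insert]
    exact (Finset.union_comm _ _)

/-- Notation for the flipped-down tiling. -/
def flipDown (T : Finset ((ℤ × ℤ) × ℕ)) (s : ℕ) (p : ℤ × ℤ) : Finset ((ℤ × ℤ) × ℕ) :=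
  (T.erase (p, s)) ∪ (sqCells p s).image (fun q => (q, 1))

lemma flipDown_ne {s : ℕ} (hs : 2 ≤ s) {T : Finset ((ℤ × ℤ) × ℕ)} {p : ℤ × ℤ}
    (hp : (p, s) ∈ T) : flipDown T s p ≠ T := by
  intro h
  have : (p, s) ∈ flipDown T s p := by rw [h]; exact hp
  rcases Finset.mem_union.mp this with h' | h'
  · exact (Finset.ne_of_mem_erase h') rfl
  · simp only [mem_image, Prod.mk.injEq] at h'
    obtain ⟨q, _, _, h1⟩ := h'
    omega

lemma flipDown_filter {s : ℕ} (hs : 2 ≤ s) (T : Finset ((ℤ × ℤ) × ℕ)) (p : ℤ × ℤ) :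
    (flipDown T s p).filter (fun t => t.2 = s) = (T.filter (fun t => t.2 = s)).erase (p, s) := by
  ext t
  simp only [flipDown, Finset.mem_filter, Finset.mem_union, Finset.mem_erase, mem_image]
  constructor
  · rintro ⟨h | h, h2⟩
    · exact ⟨h.1, h.2, h2⟩
    · obtain ⟨q, _, rfl⟩ := h
      simp at h2; omega
  · rintro ⟨h1, h2, h3⟩
    exact ⟨Or.inl ⟨h1, h2⟩, h3⟩

/-- The number of s-tiles is at most |R|/4. -/
lemma s_tiles_card {s : ℕ} (hs : 2 ≤ s) {R : Finset (ℤ × ℤ)} {T : Finset ((ℤ × ℤ) × ℕ)}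
    (hT : IsTiling 1 s R T) :
    4 * (T.filter (fun t => t.2 = s)).card ≤ R.card := by
  have hdisj := hT.2.1
  have hcard : R.card = ∑ t ∈ T, (sqCells t.1 t.2).card := by
    rw [← hT.2.2]
    exact Finset.card_biUnion (fun t ht t' ht' hne => hdisj t ht t' ht' hne)
  have h1 : ∑ t ∈ T.filter (fun t => t.2 = s), (sqCells t.1 t.2).card
      ≤ ∑ t ∈ T, (sqCells t.1 t.2).card :=
    Finset.sum_le_sum_of_subset (Finset.filter_subset _ _)
  have h2 : ∀ t ∈ T.filter (fun t => t.2 = s), 4 ≤ (sqCells t.1 t.2).card := by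
    intro t ht
    rw [card_sqCells]
    have := (Finset.mem_filter.mp ht).2
    nlinarith [this ▸ (le_refl (t.2 * t.2))]
  calc 4 * (T.filter (fun t => t.2 = s)).card
      = ∑ _t ∈ T.filter (fun t => t.2 = s), 4 := by rw [Finset.sum_const]; ring
    _ ≤ ∑ t ∈ T.filter (fun t => t.2 = s), (sqCells t.1 t.2).card := Finset.sum_le_sum h2
    _ ≤ ∑ t ∈ T, (sqCells t.1 t.2).card := h1
    _ = R.card := hcard.symm

/-- An up-flip target is determined by the flip position. -/
lemma up_determined {s : ℕ} (hs : 2 ≤ s) {R : Finset (ℤ × ℤ)}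
    {T T' : Finset ((ℤ × ℤ) × ℕ)} (hT' : IsTiling 1 s R T') {p : ℤ × ℤ}
    (hp : (p, s) ∈ T') (hTT : T = flipDown T' s p) :
    T' = (T \ (sqCells p s).image (fun q => (q, 1))) ∪ {(p, s)} := by
  set U : Finset ((ℤ × ℤ) × ℕ) := (sqCells p s).image (fun q => (q, 1)) with hU
  have hdisjU : ∀ u ∈ U, u ∉ T'.erase (p, s) := by
    intro u hu hmem
    obtain ⟨q, hq, rfl⟩ := Finset.mem_image.mp hu
    have hne : (q, 1) ≠ (p, s) := by
      intro h; injection h with _ h2; omega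
    have := hT'.2.1 (q, 1) (Finset.mem_of_mem_erase hmem) (p, s) hp hne
    simp only [sqCells_one] at this
    exact (Finset.disjoint_singleton_left.mp this) hq
  have hsub : T \ U = T'.erase (p, s) := by
    rw [hTT, flipDown, ← hU, Finset.union_sdiff_right]
    exact Finset.sdiff_eq_self_of_disjoint
      (Finset.disjoint_left.mpr fun a ha hb => hdisjU a hb ha)
  rw [hsub]
  ext t
  simp only [Finset.mem_union, Finset.mem_erase, Finset.mem_singleton]
  constructor
  · intro ht
    by_cases h : t = (p, s)
    · exact Or.inr h
    · exact Or.inl ⟨h, ht⟩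
  · rintro (⟨_, ht⟩ | rfl)
    · exact ht
    · exact hp


/-- `t`-step transition probabilities of the kernel `P` on the finite state space `Ω`. -/
noncomputable def matPow {X : Type*} [DecidableEq X] (Ω : Finset X) (P : X → X → ℝ) :
    ℕ → X → X → ℝ
  | 0 => fun x y => if x = y then 1 else 0
  | t + 1 => fun x y => ∑ z ∈ Ω, matPow Ω P t x z * P z y

section MC
variable {X : Type*} [DecidableEq X] {Ω : Finset X} {P : X → X → ℝ}

lemma exists_pos_of_sum_pos' {s : Finset X} {f : X → ℝ} (h : 0 < ∑ x ∈ s, f x) :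
    ∃ x ∈ s, 0 < f x := by
  by_contra hc
  push_neg at hc
  exact absurd (Finset.sum_nonpos hc) (by linarith)

lemma pos_of_mul_pos' {a b : ℝ} (ha : 0 ≤ a) (hb : 0 ≤ b) (h : 0 < a * b) :
    0 < a ∧ 0 < b := by
  refine ⟨ha.lt_of_ne fun h0 => ?_, hb.lt_of_ne fun h0 => ?_⟩
  · rw [← h0] at h; simp at h
  · rw [← h0] at h; simp at h

lemma matPow_nonneg (hP : ∀ a ∈ Ω, ∀ b ∈ Ω, 0 ≤ P a b) (t : ℕ) :
    ∀ x ∈ Ω, ∀ y ∈ Ω, 0 ≤ matPow Ω P t x y := by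
  induction t with
  | zero => intro x _ y _; simp only [matPow]; split <;> norm_num
  | succ t ih =>
    intro x hx y hy
    simp only [matPow]
    exact Finset.sum_nonneg fun z hz => mul_nonneg (ih x hx z hz) (hP z hz y hy)

lemma matPow_one {x : X} (hx : x ∈ Ω) (y : X) : matPow Ω P 1 x y = P x y := by
  simp only [matPow]
  rw [Finset.sum_eq_single x]
  · simp
  · intro z _ hzx; simp [Ne.symm hzx]
  · intro h; exact absurd hx h

lemma matPow_step (hP : ∀ a ∈ Ω, ∀ b ∈ Ω, 0 ≤ P a b) {t : ℕ} {x z y : X}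
    (hx : x ∈ Ω) (hz : z ∈ Ω) (hy : y ∈ Ω)
    (h1 : 0 < matPow Ω P t x z) (h2 : 0 < P z y) :
    0 < matPow Ω P (t + 1) x y := by
  have hle : matPow Ω P t x z * P z y ≤ ∑ w ∈ Ω, matPow Ω P t x w * P w y :=
    Finset.single_le_sum
      (fun w hw => mul_nonneg (matPow_nonneg hP t x hx w hw) (hP w hw y hy)) hz
  have : 0 < matPow Ω P t x z * P z y := mul_pos h1 h2
  simp only [matPow]
  linarith

lemma matPow_comp (hP : ∀ a ∈ Ω, ∀ b ∈ Ω, 0 ≤ P a b) (b : ℕ) :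
    ∀ z ∈ Ω, ∀ y ∈ Ω, 0 < matPow Ω P b z y →
    ∀ (a : ℕ), ∀ x ∈ Ω, 0 < matPow Ω P a x z → 0 < matPow Ω P (a + b) x y := by
  induction b with
  | zero =>
    intro z _ y _ h a x _ hxz
    have hzy : z = y := by
      by_contra hne
      simp only [matPow, if_neg hne] at h
      exact lt_irrefl 0 h
    subst hzy
    exact hxz
  | succ b ih =>
    intro z hz y hy h a x hx hxz
    simp only [matPow] at h
    obtain ⟨w, hw, hpos⟩ := exists_pos_of_sum_pos' h
    obtain ⟨h1, h2⟩ := pos_of_mul_pos' (matPow_nonneg hP b z hz w hw) (hP w hw y hy) hpos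
    have hxw := ih z hz w hw h1 a x hx hxz
    exact matPow_step hP hx hw hy hxw h2

end MC

/-- The central-flip chain on the (1,s)-tilings of a finite nonempty region `R` (pick a
flip with probability `1/(2|R|)`) is a symmetric row-stochastic kernel, irreducible and
aperiodic, and its unique stationary distribution is the uniform distribution on `Ω`. -/
theorem MC_square_uniform_stationary (s : ℕ) (hs : 2 ≤ s)
    (R : Finset (ℤ × ℤ)) (hR : R.Nonempty)
    (Ω : Finset (Finset ((ℤ × ℤ) × ℕ)))
    (hΩ : ∀ T, T ∈ Ω ↔ IsTiling 1 s R T)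
    (P : Finset ((ℤ × ℤ) × ℕ) → Finset ((ℤ × ℤ) × ℕ) → ℝ)
    (hflip : ∀ T ∈ Ω, ∀ T' ∈ Ω, T ≠ T' → CentralFlip s T T' →
        P T T' = 1 / (2 * (R.card : ℝ)))
    (hzero : ∀ T ∈ Ω, ∀ T' ∈ Ω, T ≠ T' → ¬ CentralFlip s T T' → P T T' = 0)
    (hdiag : ∀ T ∈ Ω, P T T = 1 - ∑ T' ∈ Ω.erase T, P T T') :
    -- Ω is nonempty (the all-unit-tiles tiling belongs to it)
    Ω.Nonempty ∧
    -- P is symmetric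
    (∀ T ∈ Ω, ∀ T' ∈ Ω, P T T' = P T' T) ∧
    -- P is row-stochastic
    (∀ T ∈ Ω, (∀ T' ∈ Ω, 0 ≤ P T T') ∧ ∑ T' ∈ Ω, P T T' = 1) ∧
    -- the chain is irreducible
    (∀ T ∈ Ω, ∀ T' ∈ Ω, ∃ t : ℕ, 0 < matPow Ω P t T T') ∧
    -- the chain is aperiodic: for each state, the gcd of return times is 1
    (∀ T ∈ Ω, ∀ d : ℕ, (∀ t : ℕ, 0 < t → 0 < matPow Ω P t T T → d ∣ t) → d = 1) ∧
    -- the uniform distribution is stationary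
    (∀ T' ∈ Ω, ∑ T ∈ Ω, (1 / (Ω.card : ℝ)) * P T T' = 1 / (Ω.card : ℝ)) ∧
    -- and it is the unique stationary distribution
    (∀ π : Finset ((ℤ × ℤ) × ℕ) → ℝ,
      (∀ T ∈ Ω, 0 ≤ π T) → ∑ T ∈ Ω, π T = 1 →
      (∀ T' ∈ Ω, ∑ T ∈ Ω, π T * P T T' = π T') →
      ∀ T ∈ Ω, π T = 1 / (Ω.card : ℝ)) := by
  classical
  have hRcard : 0 < R.card := Finset.card_pos.mpr hR
  have hRcardR : 0 < (R.card : ℝ) := by exact_mod_cast hRcard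
  set c : ℝ := 1 / (2 * (R.card : ℝ)) with hc
  have hcpos : 0 < c := by positivity
  set T₀ : Finset ((ℤ × ℤ) × ℕ) := R.image (fun q => (q, 1)) with hT₀def
  have hT₀ : T₀ ∈ Ω := (hΩ T₀).mpr (unit_tiling s R)
  have hΩne : Ω.Nonempty := ⟨T₀, hT₀⟩
  -- symmetry
  have hsymm : ∀ T ∈ Ω, ∀ T' ∈ Ω, P T T' = P T' T := by
    intro T hT T' hT'
    by_cases he : T = T'
    · rw [he]
    by_cases hcf : CentralFlip s T T'
    · rw [hflip T hT T' hT' he hcf, hflip T' hT' T hT (Ne.symm he) (Or.symm hcf)]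
    · have hcf' : ¬ CentralFlip s T' T := fun h => hcf (Or.symm h)
      rw [hzero T hT T' hT' he hcf, hzero T' hT' T hT (Ne.symm he) hcf']
  -- off-diagonal facts
  have hoffval : ∀ T ∈ Ω, ∀ T' ∈ Ω.erase T,
      P T T' = if CentralFlip s T T' then c else 0 := by
    intro T hT T' hT'
    obtain ⟨hne, hT'Ω⟩ := Finset.mem_erase.mp hT'
    by_cases hcf : CentralFlip s T T'
    · rw [if_pos hcf]; exact hflip T hT T' hT'Ω (Ne.symm hne) hcf
    · rw [if_neg hcf]; exact hzero T hT T' hT'Ω (Ne.symm hne) hcf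
  have hoffnn : ∀ T ∈ Ω, ∀ T' ∈ Ω.erase T, 0 ≤ P T T' := by
    intro T hT T' hT'
    rw [hoffval T hT T' hT']
    split
    · exact le_of_lt hcpos
    · exact le_refl 0
  -- the off-diagonal row-sum is < 1
  have hoffsum : ∀ T ∈ Ω,
      0 ≤ ∑ T' ∈ Ω.erase T, P T T' ∧ ∑ T' ∈ Ω.erase T, P T T' < 1 := by
    intro T hT
    have hTtil : IsTiling 1 s R T := (hΩ T).mp hT
    set N : Finset (Finset ((ℤ × ℤ) × ℕ)) :=
      (Ω.erase T).filter (fun T' => CentralFlip s T T') with hN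
    have hsum : ∑ T' ∈ Ω.erase T, P T T' = N.card * c := by
      rw [Finset.sum_congr rfl (hoffval T hT)]
      rw [Finset.sum_ite, Finset.sum_const, Finset.sum_const]
      simp [hN, nsmul_eq_mul]
    have hnn : (0:ℝ) ≤ N.card * c := by positivity
    -- bound N.card
    set A : Finset (Finset ((ℤ × ℤ) × ℕ)) :=
      (T.filter (fun t => t.2 = s)).image (fun t => flipDown T s t.1) with hA
    set B : Finset (Finset ((ℤ × ℤ) × ℕ)) :=
      R.image (fun p => (T \ (sqCells p s).image (fun q => (q, 1))) ∪ {(p, s)}) with hB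
    have hNsub : N ⊆ A ∪ B := by
      intro T' hT'
      obtain ⟨hT'e, hcf⟩ := Finset.mem_filter.mp hT'
      obtain ⟨hne, hT'Ω⟩ := Finset.mem_erase.mp hT'e
      rcases hcf with ⟨p, hp, hEq⟩ | ⟨p, hp, hEq⟩
      · apply Finset.mem_union_left
        rw [hA]
        apply Finset.mem_image.mpr
        exact ⟨(p, s), Finset.mem_filter.mpr ⟨hp, rfl⟩, by rw [hEq]; rfl⟩
      · apply Finset.mem_union_right
        rw [hB]
        apply Finset.mem_image.mpr
        have hT'til : IsTiling 1 s R T' := (hΩ T').mp hT'Ω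
        have hdet := up_determined hs hT'til hp hEq
        have hpR : p ∈ R := by
          have hsub := tile_subset hT'til hp
          exact hsub (mem_self_sqCells p (by omega))
        exact ⟨p, hpR, hdet.symm⟩
    have hcardN : N.card < 2 * R.card := by
      have h1 : N.card ≤ A.card + B.card :=
        le_trans (Finset.card_le_card hNsub) (Finset.card_union_le A B)
      have h2 : A.card ≤ (T.filter (fun t => t.2 = s)).card := Finset.card_image_le
      have h3 : B.card ≤ R.card := Finset.card_image_le
      have h4 := s_tiles_card hs hTtil
      omega
    have hlt : (N.card : ℝ) * c < 1 := by
      have h5 : (N.card : ℝ) < 2 * (R.card : ℝ) := by exact_mod_cast hcardN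
      have h6 : (2 * (R.card : ℝ)) * c = 1 := by
        rw [hc]; field_simp
      calc (N.card : ℝ) * c < (2 * (R.card : ℝ)) * c :=
            mul_lt_mul_of_pos_right h5 hcpos
        _ = 1 := h6
    rw [hsum]
    exact ⟨hnn, hlt⟩
  have hdiagpos : ∀ T ∈ Ω, 0 < P T T := by
    intro T hT
    rw [hdiag T hT]
    linarith [(hoffsum T hT).2]
  have hPnn : ∀ T ∈ Ω, ∀ T' ∈ Ω, 0 ≤ P T T' := by
    intro T hT T' hT'
    by_cases he : T' = T
    · rw [he]; exact le_of_lt (hdiagpos T hT)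
    · exact hoffnn T hT T' (Finset.mem_erase.mpr ⟨he, hT'⟩)
  have hrowsum : ∀ T ∈ Ω, ∑ T' ∈ Ω, P T T' = 1 := by
    intro T hT
    rw [← Finset.add_sum_erase Ω (P T) hT, hdiag T hT]
    ring
  -- connectivity
  have hkey : ∀ n : ℕ, ∀ T ∈ Ω, (T.filter (fun t => t.2 = s)).card ≤ n →
      (∃ t, 0 < matPow Ω P t T T₀) ∧ (∃ t, 0 < matPow Ω P t T₀ T) := by
    intro n
    induction n with
    | zero =>
      intro T hT hcard
      have hT0 : T = T₀ := by
        rw [hT₀def]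
        refine no_s_tiles hs ((hΩ T).mp hT) ?_
        intro t ht hts
        have hmem : t ∈ T.filter (fun t => t.2 = s) := Finset.mem_filter.mpr ⟨ht, hts⟩
        have : T.filter (fun t => t.2 = s) = ∅ :=
          Finset.card_eq_zero.mp (Nat.le_zero.mp hcard)
        rw [this] at hmem
        exact absurd hmem (Finset.notMem_empty t)
      subst hT0
      exact ⟨⟨0, by simp [matPow]⟩, ⟨0, by simp [matPow]⟩⟩
    | succ n ih =>
      intro T hT hcard
      by_cases h0 : (T.filter (fun t => t.2 = s)).card = 0
      · exact ih T hT (by omega)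
      · obtain ⟨t, htmem⟩ := Finset.card_pos.mp (Nat.pos_of_ne_zero h0)
        obtain ⟨htT, hts⟩ := Finset.mem_filter.mp htmem
        obtain ⟨p, k⟩ := t
        simp only at hts
        rw [hts] at htT htmem
        have hTtil : IsTiling 1 s R T := (hΩ T).mp hT
        set T' : Finset ((ℤ × ℤ) × ℕ) := flipDown T s p with hT'def
        have hT'til : IsTiling 1 s R T' := flipdown_tiling hs hTtil htT
        have hT'Ω : T' ∈ Ω := (hΩ T').mpr hT'til
        have hne : T ≠ T' := fun h => (flipDown_ne hs htT) h.symm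
        have hcfTT' : CentralFlip s T T' := Or.inl ⟨p, htT, rfl⟩
        have hPpos : 0 < P T T' := by
          rw [hflip T hT T' hT'Ω hne hcfTT']; exact hcpos
        have hPpos' : 0 < P T' T := by
          rw [← hsymm T hT T' hT'Ω]; exact hPpos
        have hcard' : (T'.filter (fun t => t.2 = s)).card ≤ n := by
          rw [hT'def, flipDown_filter hs]
          have h1 : (p, s) ∈ T.filter (fun t => t.2 = s) := htmem
          have h2 := Finset.card_erase_of_mem h1
          have h3 : 1 ≤ (T.filter (fun t => t.2 = s)).card := Finset.card_pos.mpr ⟨_, h1⟩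
          omega
        obtain ⟨⟨t1, h1⟩, ⟨t2, h2⟩⟩ := ih T' hT'Ω hcard'
        constructor
        · refine ⟨1 + t1, ?_⟩
          apply matPow_comp hPnn t1 T' hT'Ω T₀ hT₀ h1 1 T hT
          rw [matPow_one hT]
          exact hPpos
        · exact ⟨t2 + 1, matPow_step hPnn hT₀ hT'Ω hT h2 hPpos'⟩
  have hirr : ∀ T ∈ Ω, ∀ T' ∈ Ω, ∃ t : ℕ, 0 < matPow Ω P t T T' := by
    intro T hT T' hT'
    obtain ⟨⟨t1, h1⟩, _⟩ := hkey (T.filter (fun t => t.2 = s)).card T hT le_rfl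
    obtain ⟨_, ⟨t2, h2⟩⟩ := hkey (T'.filter (fun t => t.2 = s)).card T' hT' le_rfl
    exact ⟨t1 + t2, matPow_comp hPnn t2 T₀ hT₀ T' hT' h2 t1 T hT h1⟩
  refine ⟨hΩne, hsymm, fun T hT => ⟨hPnn T hT, hrowsum T hT⟩, hirr, ?_, ?_, ?_⟩
  -- aperiodicity
  · intro T hT d hd
    have h1 : 0 < matPow Ω P 1 T T := by
      rw [matPow_one hT]; exact hdiagpos T hT
    exact Nat.dvd_one.mp (hd 1 one_pos h1)
  -- uniform stationary
  · intro T' hT'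
    rw [← Finset.mul_sum]
    have : ∑ T ∈ Ω, P T T' = 1 := by
      rw [Finset.sum_congr rfl (fun T hT => hsymm T hT T' hT')]
      exact hrowsum T' hT'
    rw [this, mul_one]
  -- uniqueness
  · intro π hπnn hπsum hπstat
    obtain ⟨Tm, hTm, hmax⟩ := Finset.exists_max_image Ω π hΩne
    set m : ℝ := π Tm with hm
    have hcolsum : ∀ T' ∈ Ω, ∑ T ∈ Ω, P T T' = 1 := by
      intro T' hT'
      rw [Finset.sum_congr rfl (fun T hT => hsymm T hT T' hT')]
      exact hrowsum T' hT'
    have honestep : ∀ T' ∈ Ω, π T' = m → ∀ T ∈ Ω, 0 < P T T' → π T = m := by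
      intro T' hT' hπT' T hT hP
      have hzero' : ∑ T ∈ Ω, (m - π T) * P T T' = 0 := by
        have : ∑ T ∈ Ω, (m - π T) * P T T'
            = m * ∑ T ∈ Ω, P T T' - ∑ T ∈ Ω, π T * P T T' := by
          rw [Finset.mul_sum, ← Finset.sum_sub_distrib]
          exact Finset.sum_congr rfl (fun T _ => by ring)
        rw [this, hcolsum T' hT', hπstat T' hT', mul_one, hπT']
        ring
      have hterm : ∀ T'' ∈ Ω, 0 ≤ (m - π T'') * P T'' T' :=
        fun T'' hT'' => mul_nonneg (by linarith [hmax T'' hT'']) (hPnn T'' hT'' T' hT')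
      have := (Finset.sum_eq_zero_iff_of_nonneg hterm).mp hzero' T hT
      have hm0 : m - π T = 0 := by
        by_contra hne
        have : (m - π T) * P T T' ≠ 0 :=
          mul_ne_zero hne (ne_of_gt hP)
        exact this ‹(m - π T) * P T T' = 0›
      linarith
    have hclaim : ∀ t : ℕ, ∀ T ∈ Ω, ∀ T'' ∈ Ω, π T'' = m →
        0 < matPow Ω P t T T'' → π T = m := by
      intro t
      induction t with
      | zero =>
        intro T hT T'' hT'' hπ h
        have : T = T'' := by
          by_contra hne
          simp only [matPow, if_neg hne] at h
          exact lt_irrefl 0 h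
        rw [this]; exact hπ
      | succ t ih =>
        intro T hT T'' hT'' hπ h
        simp only [matPow] at h
        obtain ⟨w, hw, hpos⟩ := exists_pos_of_sum_pos' h
        obtain ⟨h1, h2⟩ := pos_of_mul_pos'
          (matPow_nonneg hPnn t T hT w hw) (hPnn w hw T'' hT'') hpos
        have hπw : π w = m := honestep T'' hT'' hπ w hw h2
        exact ih T hT w hw hπw h1
    have hall : ∀ T ∈ Ω, π T = m := by
      intro T hT
      obtain ⟨t, ht⟩ := hirr T hT Tm hTm
      exact hclaim t T hT Tm hTm rfl ht
    have hsum' : (Ω.card : ℝ) * m = 1 := by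
      rw [← hπsum, Finset.sum_congr rfl hall, Finset.sum_const, nsmul_eq_mul]
    have hΩcard : (0:ℝ) < (Ω.card : ℝ) := by
      exact_mod_cast Finset.card_pos.mpr hΩne
    intro T hT
    rw [hall T hT]
    field_simp at hsum' ⊢
    linarith
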